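/- Let l, r ≥ 0 be integers with l + r > 0, and let the coefficients a_k for -l ≤ k ≤ r be defined by a_k = -((-1)^k / k) · (l!·r!)/((l+k)!·(r-k)!) for k ≠ 0 and a_0 = -Σ_{-l ≤ ν ≤ r, ν ≠ 0} 1/ν. Then for every polynomial P with real coefficients of degree at most l + r, one has Σ_{k=-l}^{r} a_k · P(k) = P'(0). In other words, these coefficients give the finite-difference approximation of the first derivative with optimal order of accuracy l + r on the stencil {-l, …, r}. -/

import Mathlib

open Finset Polynomial

lemma prodA (k : ℤ) : ∀ (n : ℕ) (a : ℤ), a + n = k →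
    ∏ j ∈ Finset.Icc a (k-1), (k - j) = (n.factorial : ℤ) := by
  intro n
  induction n with
  | zero =>
    intro a ha
    have : Finset.Icc a (k-1) = ∅ := Finset.Icc_eq_empty (by omega)
    simp [this]
  | succ n ih =>
    intro a ha
    have hset : Finset.Icc a (k-1) = insert a (Finset.Icc (a+1) (k-1)) := by
      ext x; simp only [Finset.mem_Icc, Finset.mem_insert]; omega
    have hnot : a ∉ Finset.Icc (a+1) (k-1) := by simp
    rw [hset, Finset.prod_insert hnot, ih (a+1) (by omega), Nat.factorial_succ]
    push_cast
    have h2 : k - a = (n : ℤ) + 1 := by omega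
    rw [h2]; try ring

lemma prodB (k : ℤ) : ∀ (n : ℕ) (b : ℤ), k + n = b →
    ∏ j ∈ Finset.Icc (k+1) b, (k - j) = (-1)^n * (n.factorial : ℤ) := by
  intro n
  induction n with
  | zero =>
    intro b hb
    have : Finset.Icc (k+1) b = ∅ := Finset.Icc_eq_empty (by omega)
    simp [this]
  | succ n ih =>
    intro b hb
    have hset : Finset.Icc (k+1) b = insert b (Finset.Icc (k+1) (b-1)) := by
      ext x; simp only [Finset.mem_Icc, Finset.mem_insert]; omega
    have hnot : b ∉ Finset.Icc (k+1) (b-1) := by simp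
    rw [hset, Finset.prod_insert hnot, ih (b-1) (by omega), Nat.factorial_succ]
    push_cast
    have h2 : k - b = -((n : ℤ) + 1) := by omega
    rw [h2]; try ring

lemma prodNodes (l r : ℕ) (k : ℤ) (hk : k ∈ Finset.Icc (-(l:ℤ)) (r:ℤ)) :
    ∏ j ∈ (Finset.Icc (-(l:ℤ)) (r:ℤ)).erase k, (k - j) =
      (((l:ℤ) + k).toNat.factorial : ℤ) * (-1)^((r:ℤ) - k).toNat * (((r:ℤ) - k).toNat.factorial : ℤ) := by
  simp only [Finset.mem_Icc] at hk
  have hset : (Finset.Icc (-(l:ℤ)) (r:ℤ)).erase k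
      = Finset.Icc (-(l:ℤ)) (k-1) ∪ Finset.Icc (k+1) (r:ℤ) := by
    ext x; simp only [Finset.mem_erase, Finset.mem_Icc, Finset.mem_union]; omega
  have hdisj : Disjoint (Finset.Icc (-(l:ℤ)) (k-1)) (Finset.Icc (k+1) (r:ℤ)) := by
    rw [Finset.disjoint_left]; intro x hx hx'
    simp only [Finset.mem_Icc] at hx hx'; omega
  rw [hset, Finset.prod_union hdisj,
    prodA k ((l:ℤ) + k).toNat (-(l:ℤ)) (by omega),
    prodB k ((r:ℤ) - k).toNat (r:ℤ) (by omega)]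
  ring

lemma prodNeg (l r : ℕ) :
    ∏ j ∈ (Finset.Icc (-(l:ℤ)) (r:ℤ)).erase 0, (-j) =
      (l.factorial : ℤ) * (-1)^r * (r.factorial : ℤ) := by
  have hset : (Finset.Icc (-(l:ℤ)) (r:ℤ)).erase 0
      = Finset.Icc (-(l:ℤ)) (-1) ∪ Finset.Icc 1 (r:ℤ) := by
    ext x; simp only [Finset.mem_erase, Finset.mem_Icc, Finset.mem_union]; omega
  have hdisj : Disjoint (Finset.Icc (-(l:ℤ)) (-1:ℤ)) (Finset.Icc 1 (r:ℤ)) := by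
    rw [Finset.disjoint_left]; intro x hx hx'
    simp only [Finset.mem_Icc] at hx hx'; omega
  have hA := prodA 0 l (-(l:ℤ)) (by omega)
  have hB := prodB 0 r (r:ℤ) (by omega)
  simp only [zero_sub, zero_add] at hA hB
  rw [hset, Finset.prod_union hdisj, hA, hB]
  ring

lemma polyDerivProd {ι : Type*} [DecidableEq ι] (s : Finset ι) (f : ι → Polynomial ℝ) :
    derivative (∏ i ∈ s, f i) = ∑ i ∈ s, (∏ j ∈ s.erase i, f j) * derivative (f i) := by
  induction s using Finset.induction_on with
  | empty => simp
  | @insert a s ha ih =>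
    rw [Finset.prod_insert ha, derivative_mul, ih, Finset.mul_sum, Finset.sum_insert ha,
      Finset.erase_insert ha, mul_comm (derivative (f a))]
    congr 1
    refine Finset.sum_congr rfl fun i hi => ?_
    have hne : a ≠ i := fun h => ha (h ▸ hi)
    rw [Finset.erase_insert_of_ne hne, Finset.prod_insert (by simp [ha]), mul_assoc]


/-- Optimal finite-difference coefficients for the first derivative on the
stencil `{-l, …, r}`:  `a_k = -((-1)^k / k) · (l!·r!)/((l+k)!·(r-k)!)` for `k ≠ 0`
and `a_0 = -Σ_{-l ≤ ν ≤ r, ν ≠ 0} 1/ν`. -/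
noncomputable def aCoef (l r : ℕ) (k : ℤ) : ℝ :=
  if k = 0 then
    -∑ ν ∈ (Finset.Icc (-(l : ℤ)) (r : ℤ)).erase 0, (1 : ℝ) / (ν : ℝ)
  else
    -((-1 : ℝ) ^ k / (k : ℝ)) *
      ((Nat.factorial l * Nat.factorial r : ℕ) : ℝ) /
      ((Nat.factorial ((l : ℤ) + k).toNat * Nat.factorial ((r : ℤ) - k).toNat : ℕ) : ℝ)


lemma evalDerivBD (x y : ℝ) : (derivative (Lagrange.basisDivisor x y)).eval 0 = (x - y)⁻¹ := by
  simp [Lagrange.basisDivisor]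

lemma evalBD (x y : ℝ) : (Lagrange.basisDivisor x y).eval 0 = (x - y)⁻¹ * (-y) := by
  simp [Lagrange.basisDivisor]

lemma basis_deriv_eval (l r : ℕ) (k : ℤ) (hk : k ∈ Finset.Icc (-(l:ℤ)) (r:ℤ)) :
    (derivative (Lagrange.basis (Finset.Icc (-(l:ℤ)) (r:ℤ)) (fun j : ℤ => (j:ℝ)) k)).eval 0
      = aCoef l r k := by
  classical
  set s : Finset ℤ := Finset.Icc (-(l:ℤ)) (r:ℤ) with hs
  have hk' : -(l:ℤ) ≤ k ∧ k ≤ r := Finset.mem_Icc.mp (hs ▸ hk)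
  have h0s : (0:ℤ) ∈ s := by rw [hs]; simp [Finset.mem_Icc]
  unfold Lagrange.basis
  rw [polyDerivProd, Polynomial.eval_finset_sum]
  simp only [Polynomial.eval_mul, evalDerivBD, Polynomial.eval_prod, evalBD]
  by_cases hk0 : k = 0
  · subst hk0
    rw [aCoef, if_pos rfl, ← Finset.sum_neg_distrib]
    refine Finset.sum_congr rfl fun i hi => ?_
    have hi0 : i ≠ 0 := (Finset.mem_erase.mp hi).1
    have hprod : ∏ j ∈ (s.erase 0).erase i, ((((0:ℤ):ℝ)) - (j:ℝ))⁻¹ * (-(j:ℝ)) = 1 := by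
      refine Finset.prod_eq_one fun j hj => ?_
      have hj0 : j ≠ 0 := (Finset.mem_erase.mp (Finset.mem_erase.mp hj).2).1
      have hj0' : ((j:ℤ):ℝ) ≠ 0 := by exact_mod_cast hj0
      simp only [Int.cast_zero, zero_sub]
      field_simp
    rw [hprod, one_mul]
    have hi0' : ((i:ℤ):ℝ) ≠ 0 := by exact_mod_cast hi0
    simp only [Int.cast_zero, zero_sub]
    field_simp
  · -- k ≠ 0 : only the i = 0 term survives
    have h0ek : (0:ℤ) ∈ s.erase k := Finset.mem_erase.mpr ⟨Ne.symm hk0, h0s⟩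
    rw [Finset.sum_eq_single_of_mem 0 h0ek ?side]
    case side =>
      intro i hi hi0
      have h0mem : (0:ℤ) ∈ (s.erase k).erase i := Finset.mem_erase.mpr ⟨Ne.symm hi0, h0ek⟩
      rw [Finset.prod_eq_zero h0mem (by simp), zero_mul]
    have hkr : ((k:ℝ)) ≠ 0 := by exact_mod_cast hk0
    have hke0 : k ∈ s.erase 0 := Finset.mem_erase.mpr ⟨hk0, hk⟩
    have hAr : ∏ j ∈ s.erase k, ((k:ℝ) - (j:ℝ)) =
        ((((l:ℤ)+k).toNat.factorial : ℝ)) * (-1:ℝ)^(((r:ℤ)-k).toNat) *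
          ((((r:ℤ)-k).toNat.factorial : ℝ)) := by
      exact_mod_cast congrArg (fun z : ℤ => (z:ℝ)) (prodNodes l r k (hs ▸ hk))
    have hBr : ∏ j ∈ s.erase 0, (-(j:ℝ)) =
        (l.factorial : ℝ) * (-1:ℝ)^r * (r.factorial : ℝ) := by
      exact_mod_cast congrArg (fun z : ℤ => (z:ℝ)) (hs ▸ prodNeg l r)
    have hu2 : (-1:ℝ)^k = 1 ∨ (-1:ℝ)^k = -1 := by
      rcases Int.even_or_odd k with ⟨m, hm⟩ | ⟨m, hm⟩
      · left; rw [hm, ← two_mul, zpow_mul]; norm_num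
      · right; rw [hm, zpow_add₀ (by norm_num : (-1:ℝ) ≠ 0), zpow_mul]; norm_num
    have hsq : (-1:ℝ)^k * (-1:ℝ)^k = 1 := by
      rw [← zpow_add₀ (by norm_num : (-1:ℝ) ≠ 0), ← two_mul, zpow_mul]; norm_num
    have hE : ((-1:ℝ))^(((r:ℤ)-k).toNat) = (-1:ℝ)^r * (-1:ℝ)^k := by
      have hnn : (0:ℤ) ≤ (r:ℤ) - k := by omega
      have h3 : (-1:ℝ)^((r:ℤ)-k) * (-1:ℝ)^k = (-1:ℝ)^(r:ℤ) := by
        rw [← zpow_add₀ (by norm_num : (-1:ℝ) ≠ 0)]; congr 1; ring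
      have h1 : ((-1:ℝ))^(((r:ℤ)-k).toNat) = (-1:ℝ)^((r:ℤ)-k) := by
        rw [← zpow_natCast, Int.toNat_of_nonneg hnn]
      rw [h1]
      calc (-1:ℝ)^((r:ℤ)-k) = (-1:ℝ)^((r:ℤ)-k) * ((-1:ℝ)^k * (-1:ℝ)^k) := by
            rw [hsq, mul_one]
        _ = ((-1:ℝ)^((r:ℤ)-k) * (-1:ℝ)^k) * (-1:ℝ)^k := by ring
        _ = (-1:ℝ)^(r:ℤ) * (-1:ℝ)^k := by rw [h3]
        _ = (-1:ℝ)^r * (-1:ℝ)^k := by rw [zpow_natCast]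
    have h1' : ((k:ℝ)) * ∏ x ∈ (s.erase k).erase 0, ((k:ℝ) - (x:ℝ)) =
        ((((l:ℤ)+k).toNat.factorial : ℝ)) * (-1:ℝ)^(((r:ℤ)-k).toNat) *
          ((((r:ℤ)-k).toNat.factorial : ℝ)) := by
      have h := Finset.mul_prod_erase (s.erase k) (fun j : ℤ => (k:ℝ) - (j:ℝ)) h0ek
      simp only [Int.cast_zero, sub_zero] at h
      exact h.trans hAr
    have h2' : (-(k:ℝ)) * ∏ x ∈ (s.erase k).erase 0, (-(x:ℝ)) =
        (l.factorial : ℝ) * (-1:ℝ)^r * (r.factorial : ℝ) := by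
      have h := Finset.mul_prod_erase (s.erase 0) (fun j : ℤ => -(j:ℝ)) hke0
      rw [Finset.erase_right_comm] at h
      exact h.trans hBr
    have hPA : (∏ x ∈ (s.erase k).erase 0, ((k:ℝ) - (x:ℝ))) =
        (((((l:ℤ)+k).toNat.factorial : ℝ)) * ((-1:ℝ)^r * (-1:ℝ)^k) *
          ((((r:ℤ)-k).toNat.factorial : ℝ))) / (k:ℝ) := by
      rw [eq_div_iff hkr, mul_comm, ← hE]; exact h1'
    have hPB : (∏ x ∈ (s.erase k).erase 0, (-(x:ℝ))) =
        ((l.factorial : ℝ) * (-1:ℝ)^r * (r.factorial : ℝ)) / (-(k:ℝ)) := by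
      rw [eq_div_iff (neg_ne_zero.mpr hkr), mul_comm]; exact h2'
    have hfa : ((((l:ℤ)+k).toNat.factorial : ℝ)) ≠ 0 :=
      Nat.cast_ne_zero.mpr (Nat.factorial_ne_zero _)
    have hfb : ((((r:ℤ)-k).toNat.factorial : ℝ)) ≠ 0 :=
      Nat.cast_ne_zero.mpr (Nat.factorial_ne_zero _)
    have hfl : ((l.factorial : ℝ)) ≠ 0 := Nat.cast_ne_zero.mpr (Nat.factorial_ne_zero _)
    have hfr : ((r.factorial : ℝ)) ≠ 0 := Nat.cast_ne_zero.mpr (Nat.factorial_ne_zero _)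
    rw [Finset.prod_mul_distrib, Finset.prod_inv_distrib, hPA, hPB, aCoef, if_neg hk0]
    push_cast
    rcases hu2 with hu | hu <;> rw [hu] <;> field_simp <;> ring

/-- The coefficients `a_k` reproduce the first derivative exactly on all
polynomials of degree at most `l + r`. -/
theorem firstDerivative_optimal_accuracy (l r : ℕ) (hlr : 0 < l + r)
    (P : Polynomial ℝ) (hP : P.natDegree ≤ l + r) :
    ∑ k ∈ Finset.Icc (-(l : ℤ)) (r : ℤ), aCoef l r k * P.eval (k : ℝ) =
      P.derivative.eval 0 := by
  classical
  have hinj : Set.InjOn (fun j : ℤ => (j:ℝ)) (Finset.Icc (-(l:ℤ)) (r:ℤ)) :=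
    fun a _ b _ h => by simpa using Int.cast_injective h
  have hcard : (Finset.Icc (-(l:ℤ)) (r:ℤ)).card = l + r + 1 := by
    rw [Int.card_Icc]; omega
  have hdeg : P.degree < ((Finset.Icc (-(l:ℤ)) (r:ℤ)).card : ℕ) := by
    rw [hcard]
    calc P.degree ≤ (P.natDegree : WithBot ℕ) := Polynomial.degree_le_natDegree
      _ < ((l + r + 1 : ℕ) : WithBot ℕ) := by exact_mod_cast Nat.lt_succ_of_le hP
  have hPinterp := Lagrange.eq_interpolate (v := fun j : ℤ => (j:ℝ)) hinj hdeg
  conv_rhs => rw [hPinterp]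
  rw [Lagrange.interpolate_apply, map_sum, Polynomial.eval_finset_sum]
  refine Finset.sum_congr rfl fun k hk => ?_
  rw [Polynomial.derivative_C_mul, Polynomial.eval_mul, Polynomial.eval_C,
    basis_deriv_eval l r k hk, mul_comm]
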